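/- Let R be a semiring with R ≠ {0} such that for all f, g ∈ R \ {0}, f+g ≠ 0 and f·g ≠ 0. Then any congruence 𝒞 on the 𝕋-extension R ×ₑ 𝕋 satisfies exactly one of: (1) whenever (f,a) ∼ (g,b), we have a = b; or (2) (f,a) ∼ (g,b) for all f, g ∈ R \ {0} and all a, b ∈ ℝ. -/

import Mathlib

/-- The 𝕋-extension `R ×ₑ 𝕋` of a semiring-like structure with zero `zero`:
carrier `((R \ {zero}) × ℝ) ∪ {-∞}`, with `none` playing the role of `-∞`. -/
abbrev TExt (R : Type*) (zero : R) : Type _ := Option ({f : R // f ≠ zero} × ℝ)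

/-- Addition on the 𝕋-extension. -/
noncomputable def TExt.add {R : Type*} {zero : R} (radd : R → R → R)
    (h : ∀ f g : R, f ≠ zero → g ≠ zero → radd f g ≠ zero) :
    TExt R zero → TExt R zero → TExt R zero
  | none, x => x
  | x, none => x
  | some (f, a), some (g, b) =>
      if a > b then some (f, a)
      else if a < b then some (g, b)
      else some (⟨radd f.1 g.1, h _ _ f.2 g.2⟩, a)

/-- Multiplication on the 𝕋-extension. -/
def TExt.mul {R : Type*} {zero : R} (rmul : R → R → R)
    (h : ∀ f g : R, f ≠ zero → g ≠ zero → rmul f g ≠ zero) :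
    TExt R zero → TExt R zero → TExt R zero
  | none, _ => none
  | _, none => none
  | some (f, a), some (g, b) => some (⟨rmul f.1 g.1, h _ _ f.2 g.2⟩, a + b)

/-- A congruence on the 𝕋-extension: an equivalence relation compatible with
both operations. -/
noncomputable def TExt.IsCongruence {R : Type*} {zero : R} (radd rmul : R → R → R)
    (hadd : ∀ f g : R, f ≠ zero → g ≠ zero → radd f g ≠ zero)
    (hmul : ∀ f g : R, f ≠ zero → g ≠ zero → rmul f g ≠ zero)
    (C : TExt R zero → TExt R zero → Prop) : Prop :=
  Equivalence C ∧
    (∀ a b c d, C a b → C c d → C (TExt.add radd hadd a c) (TExt.add radd hadd b d)) ∧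
    (∀ a b c d, C a b → C c d → C (TExt.mul rmul hmul a c) (TExt.mul rmul hmul b d))

/-- Any congruence on `R ×ₑ 𝕋` satisfies exactly one of:
(1) `(f,a) ∼ (g,b)` implies `a = b`; (2) `(f,a) ∼ (g,b)` for all nonzero
`f, g` and all reals `a, b`. -/
lemma TExt_key {R : Type*} [Semiring R] [Nontrivial R]
    (hadd : ∀ f g : R, f ≠ 0 → g ≠ 0 → f + g ≠ 0)
    (hmul : ∀ f g : R, f ≠ 0 → g ≠ 0 → f * g ≠ 0)
    (C : TExt R (0:R) → TExt R (0:R) → Prop)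
    (hequiv : Equivalence C)
    (hCadd : ∀ a b c d, C a b → C c d → C (TExt.add (·+·) hadd a c) (TExt.add (·+·) hadd b d))
    (hCmul : ∀ a b c d, C a b → C c d → C (TExt.mul (·*·) hmul a c) (TExt.mul (·*·) hmul b d))
    {f g : {x : R // x ≠ 0}} {a b : ℝ} (hfg : C (some (f,a)) (some (g,b))) (hab : b < a) :
    ∀ (h h' : {x : R // x ≠ 0}) (u v : ℝ), C (some (h,u)) (some (h',v)) := by
  obtain ⟨ε, hε⟩ : ∃ ε : ℝ, ε = a - b := ⟨_, rfl⟩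
  have hεpos : 0 < ε := by linarith
  -- Step B
  have hB : ∀ (h : {x : R // x ≠ 0}) (c : ℝ), b < c → c < a → C (some (f,a)) (some (h,c)) := by
    intro h c h1 h2
    have := hCadd _ _ _ _ hfg (hequiv.refl (some (h,c)))
    simpa [TExt.add, h2, h1, lt_asymm h1] using this
  -- translation
  have hT : ∀ (h h' : {x : R // x ≠ 0}) (u v t : ℝ),
      C (some (h,u)) (some (h',v)) → C (some (h,u+t)) (some (h',v+t)) := by
    intro h h' u v t hc
    have he : ∀ (k : {x : R // x ≠ 0}) (w : ℝ),
        TExt.mul (·*·) hmul (some (k,w)) (some (⟨(1:R), one_ne_zero⟩, t)) = some (k, w+t) := by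
      intro k w
      simp [TExt.mul, Subtype.ext_iff]
    have := hCmul _ _ _ _ hc (hequiv.refl (some (⟨(1:R), one_ne_zero⟩, t)))
    rwa [he, he] at this
  -- local lemma
  have hL : ∀ (h h' : {x : R // x ≠ 0}) (u v : ℝ), |u - v| < ε →
      C (some (h,u)) (some (h',v)) := by
    intro h h' u v huv
    obtain ⟨δ, hδ⟩ : ∃ δ : ℝ, δ = (ε - |u - v|) / 2 := ⟨_, rfl⟩
    have hδpos : 0 < δ := by rw [hδ]; linarith
    obtain ⟨t, ht⟩ : ∃ t : ℝ, t = min u v - b - δ := ⟨_, rfl⟩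
    have hmu : min u v ≤ u := min_le_left u v
    have hmv : min u v ≤ v := min_le_right u v
    have hsu : u - min u v ≤ |u - v| := by
      rcases le_total u v with hc | hc
      · rw [min_eq_left hc]; simpa using abs_nonneg (u - v)
      · rw [min_eq_right hc]; exact le_abs_self _
    have hsv : v - min u v ≤ |u - v| := by
      rcases le_total u v with hc | hc
      · rw [min_eq_left hc, abs_sub_comm]; exact le_abs_self _
      · rw [min_eq_right hc]; simpa using abs_nonneg (u - v)
    have h1 : b < u - t ∧ u - t < a := by
      constructor
      · rw [ht]; have := min_le_left u v; linarith
      · rw [ht]; rw [hδ] at *; linarith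
    have h2 : b < v - t ∧ v - t < a := by
      constructor
      · rw [ht]; linarith
      · rw [ht]; rw [hδ] at *; linarith
    have c1 := hB h (u - t) h1.1 h1.2
    have c2 := hB h' (v - t) h2.1 h2.2
    have c3 : C (some (h, u - t)) (some (h', v - t)) := hequiv.trans (hequiv.symm c1) c2
    have := hT h h' (u - t) (v - t) t c3
    simpa using this
  -- global by induction
  have hG : ∀ (n : ℕ) (h h' : {x : R // x ≠ 0}) (u v : ℝ), |u - v| ≤ n * (ε/2) →
      C (some (h,u)) (some (h',v)) := by
    intro n
    induction n with
    | zero =>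
      intro h h' u v huv
      have h0 : |u - v| ≤ 0 := by simpa using huv
      exact hL h h' u v (lt_of_le_of_lt h0 hεpos)
    | succ n ih =>
      intro h h' u v huv
      rcases lt_or_ge (|u - v|) ε with hc | hc
      · exact hL h h' u v hc
      · have hapos : 0 < |u - v| := lt_of_lt_of_le hεpos hc
        have hne : u - v ≠ 0 := fun h0 => by rw [h0] at hapos; simp at hapos
        obtain ⟨w, hw⟩ : ∃ w : ℝ, w = v - (v - u) * (ε/2) / |u - v| := ⟨_, rfl⟩
        have h1 : |u - w| ≤ n * (ε/2) := by
          have heq : u - w = (u - v) * (1 - (ε/2) / |u - v|) := by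
            rw [hw]; field_simp; ring
          have hfac : (0:ℝ) ≤ 1 - (ε/2) / |u - v| := by
            rw [sub_nonneg, div_le_one hapos]; linarith
          rw [heq, abs_mul, abs_of_nonneg hfac]
          have heq2 : |u - v| * (1 - ε / 2 / |u - v|) = |u - v| - ε/2 := by
            field_simp
          rw [heq2]
          push_cast at huv
          linarith
        have h2 : |w - v| < ε := by
          have heq : w - v = -((v - u) / |u - v| * (ε/2)) := by rw [hw]; ring
          have hone : abs ((v - u) / abs (u - v)) = 1 := by
            rw [abs_div, abs_abs, abs_sub_comm, div_self (ne_of_gt hapos)]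
          rw [heq, abs_neg, abs_mul, hone, one_mul, abs_of_pos (by linarith : (0:ℝ) < ε/2)]
          linarith
        exact hequiv.trans (ih h h' u w h1) (hL h' h' w v h2)
  intro h h' u v
  obtain ⟨n, hn⟩ := exists_nat_ge (|u - v| / (ε/2))
  refine hG n h h' u v ?_
  rw [div_le_iff₀ (by linarith)] at hn
  linarith

theorem TExt_congruence_dichotomy {R : Type*} [Semiring R] [Nontrivial R]
    (hadd : ∀ f g : R, f ≠ 0 → g ≠ 0 → f + g ≠ 0)
    (hmul : ∀ f g : R, f ≠ 0 → g ≠ 0 → f * g ≠ 0)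
    (C : TExt R (0 : R) → TExt R (0 : R) → Prop)
    (hC : TExt.IsCongruence (· + ·) (· * ·) hadd hmul C) :
    Xor'
      (∀ (f g : {x : R // x ≠ 0}) (a b : ℝ), C (some (f, a)) (some (g, b)) → a = b)
      (∀ (f g : {x : R // x ≠ 0}) (a b : ℝ), C (some (f, a)) (some (g, b))) := by
  obtain ⟨hequiv, hCadd, hCmul⟩ := hC
  by_cases h1 : ∀ (f g : {x : R // x ≠ 0}) (a b : ℝ), C (some (f, a)) (some (g, b)) → a = b
  · refine Or.inl ⟨h1, fun h2 => ?_⟩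
    have := h1 ⟨1, one_ne_zero⟩ ⟨1, one_ne_zero⟩ 0 1 (h2 _ _ 0 1)
    norm_num at this
  · refine Or.inr ⟨?_, h1⟩
    push_neg at h1
    obtain ⟨f, g, a, b, hfg, hab⟩ := h1
    rcases (Ne.lt_or_gt hab) with hlt | hlt
    · exact TExt_key hadd hmul C hequiv hCadd hCmul (hequiv.symm hfg) hlt
    · exact TExt_key hadd hmul C hequiv hCadd hCmul hfg hlt
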